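/- arXiv:1701.05530 — 4 statements merged into one kernel-verified Lean document; each statement's English description precedes it below -/
import Mathlib

section
/- Let Ξ = (ξ_{ij})_{i≠j, i,j∈{1,…,n}} (n ≥ 4) be a family of real random variables with all second moments finite that is jointly exchangeable, i.e. for every permutation π of {1,…,n} the array (ξ_{π(i)π(j)})_{i≠j} has the same joint distribution as (ξ_{ij})_{i≠j}. Then the covariance matrix of Ξ contains at most six unique values: there exist constants σ², φ_a, φ_b, φ_c, φ_d, φ_e such that for all distinct i, j: Var(ξ_{ij}) = σ² and Cov(ξ_{ij}, ξ_{ji}) = φ_a; for all distinct i, j, k: Cov(ξ_{ij}, ξ_{kj}) = φ_b, Cov(ξ_{ij}, ξ_{ik}) = φ_c, and Cov(ξ_{ij}, ξ_{ki}) = Cov(ξ_{ij}, ξ_{jk}) = φ_d; and for all distinct i, j, k, l: Cov(ξ_{ij}, ξ_{kl}) = φ_e. -/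
open MeasureTheory ProbabilityTheory Filter
open scoped BigOperators Topology ENNReal NNReal

/-- Covariance of two real random variables (w.r.t. the ambient volume measure). -/
noncomputable def cov {Ω : Type} [MeasureSpace Ω] (X Y : Ω → ℝ) : ℝ :=
  ∫ ω, (X ω - ∫ ω', X ω') * (Y ω - ∫ ω', Y ω')

lemma cov_comm {Ω : Type} [MeasureSpace Ω] (X Y : Ω → ℝ) : cov X Y = cov Y X := by
  unfold cov; simp_rw [mul_comm]

lemma cov_eq_of_map_eq {Ω : Type} [MeasureSpace Ω] {X Y X' Y' : Ω → ℝ}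
    (hX : Measurable X) (hY : Measurable Y) (hX' : Measurable X') (hY' : Measurable Y')
    (h : Measure.map (fun ω => (X ω, Y ω)) volume
       = Measure.map (fun ω => (X' ω, Y' ω)) volume) :
    cov X Y = cov X' Y' := by
  have hp : Measurable fun ω => (X ω, Y ω) := hX.prodMk hY
  have hp' : Measurable fun ω => (X' ω, Y' ω) := hX'.prodMk hY'
  set μ := Measure.map (fun ω => (X ω, Y ω)) volume with hμ
  have key : ∀ (Z W : Ω → ℝ) (hZW : Measurable fun ω => (Z ω, W ω))
      (hm : Measure.map (fun ω => (Z ω, W ω)) volume = μ),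
      cov Z W = ∫ p : ℝ × ℝ, (p.1 - ∫ q : ℝ × ℝ, q.1 ∂μ) * (p.2 - ∫ q : ℝ × ℝ, q.2 ∂μ) ∂μ := by
    intro Z W hZW hm
    have e1 : ∫ ω, Z ω = ∫ q : ℝ × ℝ, q.1 ∂μ := by
      rw [← hm, integral_map hZW.aemeasurable measurable_fst.aestronglyMeasurable]
    have e2 : ∫ ω, W ω = ∫ q : ℝ × ℝ, q.2 ∂μ := by
      rw [← hm, integral_map hZW.aemeasurable measurable_snd.aestronglyMeasurable]
    have hg : Measurable fun p : ℝ × ℝ =>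
        (p.1 - ∫ q : ℝ × ℝ, q.1 ∂μ) * (p.2 - ∫ q : ℝ × ℝ, q.2 ∂μ) :=
      ((measurable_fst.sub measurable_const).mul (measurable_snd.sub measurable_const))
    calc cov Z W = ∫ ω, (Z ω - ∫ q : ℝ × ℝ, q.1 ∂μ) * (W ω - ∫ q : ℝ × ℝ, q.2 ∂μ) := by
          unfold cov; rw [e1, e2]
      _ = ∫ p : ℝ × ℝ, (p.1 - ∫ q : ℝ × ℝ, q.1 ∂μ) * (p.2 - ∫ q : ℝ × ℝ, q.2 ∂μ)
            ∂(Measure.map (fun ω => (Z ω, W ω)) volume) :=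
          (integral_map hZW.aemeasurable hg.aestronglyMeasurable).symm
      _ = _ := by rw [hm]
  rw [key X Y hp rfl, key X' Y' hp' (by rw [← h])]

lemma exists_perm_tuple {n : ℕ} (v w : Fin 4 → Fin n)
    (hv : Function.Injective v) (hw : Function.Injective w) :
    ∃ π : Equiv.Perm (Fin n), ∀ m, π (v m) = w m := by
  classical
  let ev : Fin 4 ≃ Set.range v := Equiv.ofInjective v hv
  let ew : Fin 4 ≃ Set.range w := Equiv.ofInjective w hw
  let e : {x : Fin n // x ∈ Set.range v} ≃ {x : Fin n // x ∈ Set.range w} :=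
    ev.symm.trans ew
  refine ⟨e.extendSubtype, fun m => ?_⟩
  rw [e.extendSubtype_apply_of_mem _ ⟨m, rfl⟩]
  show (ew (ev.symm ⟨v m, ⟨m, rfl⟩⟩) : Fin n) = w m
  have : ev.symm ⟨v m, ⟨m, rfl⟩⟩ = m := by
    apply ev.injective; simp [ev, Equiv.ofInjective_apply]
  rw [this]; rfl

lemma inj4 {α : Type*} {i j k l : α} (hij : i ≠ j) (hik : i ≠ k) (hil : i ≠ l)
    (hjk : j ≠ k) (hjl : j ≠ l) (hkl : k ≠ l) : Function.Injective ![i, j, k, l] := by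
  intro a b hab
  fin_cases a <;> fin_cases b <;> simp_all

/-- If a family `(ξ i j)_{i ≠ j}` of real random variables on `n ≥ 4` actors with finite
second moments is jointly exchangeable (its joint law, as a random point of
`ℝ^{ordered dyads}`, is invariant under simultaneous relabeling of rows and columns by any
permutation), then its covariance matrix contains at most six unique values. -/
theorem exchangeable_cov_six_values {Ω : Type} [MeasureSpace Ω]
    [IsProbabilityMeasure (volume : Measure Ω)]
    (n : ℕ) (hn : 4 ≤ n) (ξ : Fin n → Fin n → Ω → ℝ)
    (hmeas : ∀ i j, Measurable (ξ i j))
    (hL2 : ∀ i j, i ≠ j → MemLp (ξ i j) 2 volume)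
    (hexch : ∀ π : Equiv.Perm (Fin n),
      Measure.map
          (fun ω => fun q : {q : Fin n × Fin n // q.1 ≠ q.2} => ξ (π q.1.1) (π q.1.2) ω)
          volume
        = Measure.map
          (fun ω => fun q : {q : Fin n × Fin n // q.1 ≠ q.2} => ξ q.1.1 q.1.2 ω)
          volume) :
    ∃ σ2 φa φb φc φd φe : ℝ,
      (∀ i j, i ≠ j → cov (ξ i j) (ξ i j) = σ2 ∧ cov (ξ i j) (ξ j i) = φa) ∧
      (∀ i j k, i ≠ j → i ≠ k → j ≠ k →
        cov (ξ i j) (ξ k j) = φb ∧ cov (ξ i j) (ξ i k) = φc ∧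
        cov (ξ i j) (ξ k i) = φd ∧ cov (ξ i j) (ξ j k) = φd) ∧
      (∀ i j k l, i ≠ j → i ≠ k → i ≠ l → j ≠ k → j ≠ l → k ≠ l →
        cov (ξ i j) (ξ k l) = φe) := by
  classical
  -- covariance is invariant under simultaneous permutation of indices
  have key : ∀ (π : Equiv.Perm (Fin n)) (i j k l : Fin n), i ≠ j → k ≠ l →
      cov (ξ (π i) (π j)) (ξ (π k) (π l)) = cov (ξ i j) (ξ k l) := by
    intro π i j k l hij hkl
    have hg : Measurable fun f : {q : Fin n × Fin n // q.1 ≠ q.2} → ℝ =>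
        (f ⟨(i, j), hij⟩, f ⟨(k, l), hkl⟩) :=
      (measurable_pi_apply _).prodMk (measurable_pi_apply _)
    have hF : ∀ ρ : Equiv.Perm (Fin n),
        Measurable fun ω => fun q : {q : Fin n × Fin n // q.1 ≠ q.2} =>
          ξ (ρ q.1.1) (ρ q.1.2) ω :=
      fun ρ => measurable_pi_lambda _ fun q => hmeas _ _
    apply cov_eq_of_map_eq (hmeas _ _) (hmeas _ _) (hmeas _ _) (hmeas _ _)
    have h1 := Measure.map_map (μ := volume) hg (hF π)
    simp only [Function.comp_def] at h1
    calc Measure.map (fun ω => (ξ (π i) (π j) ω, ξ (π k) (π l) ω)) volume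
        = Measure.map (fun f : {q : Fin n × Fin n // q.1 ≠ q.2} → ℝ =>
            (f ⟨(i, j), hij⟩, f ⟨(k, l), hkl⟩))
            (Measure.map (fun ω => fun q : {q : Fin n × Fin n // q.1 ≠ q.2} =>
              ξ (π q.1.1) (π q.1.2) ω) volume) := h1.symm
      _ = Measure.map (fun f : {q : Fin n × Fin n // q.1 ≠ q.2} → ℝ =>
            (f ⟨(i, j), hij⟩, f ⟨(k, l), hkl⟩))
            (Measure.map (fun ω => fun q : {q : Fin n × Fin n // q.1 ≠ q.2} =>
              ξ q.1.1 q.1.2 ω) volume) := by rw [hexch π]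
      _ = Measure.map (fun ω => (ξ i j ω, ξ k l ω)) volume := by
          have := Measure.map_map (μ := volume) hg (hF 1)
          simp only [Function.comp_def, Equiv.Perm.coe_one, id] at this
          exact this
  -- base tuple
  let v : Fin 4 → Fin n := fun m => ⟨(m : ℕ), by omega⟩
  have hvinj : Function.Injective v := by
    intro a b h
    exact Fin.ext (by simpa [v] using congrArg Fin.val h)
  have hvne : ∀ m m' : Fin 4, m ≠ m' → v m ≠ v m' := fun m m' h hh => h (hvinj hh)
  -- picking fresh elements
  have pick : ∀ s : Finset (Fin n), s.card ≤ 3 → ∃ x, x ∉ s := by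
    intro s hs
    have h1 : 0 < sᶜ.card := by
      rw [Finset.card_compl]
      simp only [Fintype.card_fin]
      omega
    obtain ⟨x, hx⟩ := Finset.card_pos.mp h1
    exact ⟨x, Finset.mem_compl.mp hx⟩
  -- extension of distinct quadruples
  have ext4 : ∀ i j k l : Fin n, i ≠ j → i ≠ k → i ≠ l → j ≠ k → j ≠ l → k ≠ l →
      ∃ π : Equiv.Perm (Fin n),
        π (v 0) = i ∧ π (v 1) = j ∧ π (v 2) = k ∧ π (v 3) = l := by
    intro i j k l hij hik hil hjk hjl hkl
    obtain ⟨π, hπ⟩ := exists_perm_tuple v ![i, j, k, l] hvinj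
      (inj4 hij hik hil hjk hjl hkl)
    exact ⟨π, hπ 0, hπ 1, hπ 2, hπ 3⟩
  -- extension of distinct triples
  have ext3 : ∀ i j k : Fin n, i ≠ j → i ≠ k → j ≠ k →
      ∃ π : Equiv.Perm (Fin n), π (v 0) = i ∧ π (v 1) = j ∧ π (v 2) = k := by
    intro i j k hij hik hjk
    obtain ⟨l, hl⟩ := pick {i, j, k} (by
      refine le_trans (Finset.card_insert_le _ _) ?_
      refine Nat.succ_le_succ (le_trans (Finset.card_insert_le _ _) ?_)
      simp)
    simp only [Finset.mem_insert, Finset.mem_singleton, not_or] at hl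
    obtain ⟨π, h0, h1, h2, _⟩ := ext4 i j k l hij hik (Ne.symm hl.1) hjk
      (Ne.symm hl.2.1) (Ne.symm hl.2.2)
    exact ⟨π, h0, h1, h2⟩
  refine ⟨cov (ξ (v 0) (v 1)) (ξ (v 0) (v 1)), cov (ξ (v 0) (v 1)) (ξ (v 1) (v 0)),
    cov (ξ (v 0) (v 1)) (ξ (v 2) (v 1)), cov (ξ (v 0) (v 1)) (ξ (v 0) (v 2)),
    cov (ξ (v 0) (v 1)) (ξ (v 2) (v 0)), cov (ξ (v 0) (v 1)) (ξ (v 2) (v 3)),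
    ?_, ?_, ?_⟩
  · intro i j hij
    obtain ⟨c, hc⟩ := pick {i, j} (le_trans (Finset.card_insert_le _ _) (by simp))
    simp only [Finset.mem_insert, Finset.mem_singleton, not_or] at hc
    obtain ⟨π, h0, h1, _⟩ := ext3 i j c hij (Ne.symm hc.1) (Ne.symm hc.2)
    constructor
    · rw [← h0, ← h1]
      exact key π (v 0) (v 1) (v 0) (v 1) (hvne 0 1 (by decide)) (hvne 0 1 (by decide))
    · rw [← h0, ← h1]
      exact key π (v 0) (v 1) (v 1) (v 0) (hvne 0 1 (by decide)) (hvne 1 0 (by decide))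
  · intro i j k hij hik hjk
    obtain ⟨π, h0, h1, h2⟩ := ext3 i j k hij hik hjk
    obtain ⟨π', h0', h1', h2'⟩ := ext3 j k i hjk (Ne.symm hij) (Ne.symm hik)
    refine ⟨?_, ?_, ?_, ?_⟩
    · rw [← h0, ← h1, ← h2]
      exact key π (v 0) (v 1) (v 2) (v 1) (hvne 0 1 (by decide)) (hvne 2 1 (by decide))
    · rw [← h0, ← h1, ← h2]
      exact key π (v 0) (v 1) (v 0) (v 2) (hvne 0 1 (by decide)) (hvne 0 2 (by decide))
    · rw [← h0, ← h1, ← h2]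
      exact key π (v 0) (v 1) (v 2) (v 0) (hvne 0 1 (by decide)) (hvne 2 0 (by decide))
    · rw [cov_comm, ← h0', ← h1', ← h2']
      exact key π' (v 0) (v 1) (v 2) (v 0) (hvne 0 1 (by decide)) (hvne 2 0 (by decide))
  · intro i j k l hij hik hil hjk hjl hkl
    obtain ⟨π, h0, h1, h2, h3⟩ := ext4 i j k l hij hik hil hjk hjl hkl
    rw [← h0, ← h1, ← h2, ← h3]
    exact key π (v 0) (v 1) (v 2) (v 3) (hvne 0 1 (by decide)) (hvne 2 3 (by decide))
end

section
/- Let n ≥ 2and let e ∈ ℝ^{n(n−1)} be any vector indexed by the ordered dyads among n actors. Let S be the n(n−1) × n(n−1) matrix with S_{(i,j),(k,l)} = 1 if {i,j} ∩ {k,l} ≠ ∅ and 0 otherwise. Then the Hadamard product (e e^T) ∘ S has rank at most n(n−1)/2; in particular, the dyadic clustering covariance matrix estimate (e e^T) ∘ S is singular. -/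
open MeasureTheory ProbabilityTheory Filter
open scoped BigOperators

/-- The type of ordered dyads among `n` actors. -/
abbrev Dyad (n : ℕ) := {p : Fin n × Fin n // p.1 ≠ p.2}

/-- The `n(n-1) × n(n-1)` overlap indicator matrix `S`, with entry `1` whenever the two
ordered dyads share an actor and `0` otherwise. -/
def overlapMatrix (n : ℕ) : Matrix (Dyad n) (Dyad n) ℝ :=
  Matrix.of fun d e =>
    if d.1.1 = e.1.1 ∨ d.1.1 = e.1.2 ∨ d.1.2 = e.1.1 ∨ d.1.2 = e.1.2 then 1 else 0

abbrev UDyad (n : ℕ) := {p : Fin n × Fin n // p.1 < p.2}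

def toU {n : ℕ} (d : Dyad n) : UDyad n :=
  if h : d.1.1 < d.1.2 then ⟨(d.1.1, d.1.2), h⟩
  else ⟨(d.1.2, d.1.1), lt_of_le_of_ne (not_lt.mp h) d.2.symm⟩

def fromU {n : ℕ} (u : UDyad n) (b : Bool) : Dyad n :=
  if b then ⟨(u.1.1, u.1.2), u.2.ne⟩ else ⟨(u.1.2, u.1.1), u.2.ne'⟩

lemma fromU_inj {n : ℕ} : Function.Injective (fun p : UDyad n × Bool => fromU p.1 p.2) := by
  rintro ⟨⟨⟨a,b⟩,hu⟩, bu⟩ ⟨⟨⟨c,d⟩,hv⟩, bv⟩ h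
  simp only [fromU] at h
  simp only at hu hv
  cases bu <;> cases bv <;> simp_all [Subtype.ext_iff, Prod.ext_iff]
  · obtain ⟨rfl, rfl⟩ := h; exact absurd (hu.trans hv) (lt_irrefl _)
  · obtain ⟨rfl, rfl⟩ := h; exact absurd (hv.trans hu) (lt_irrefl _)

lemma card_dyad (n : ℕ) : Fintype.card (Dyad n) = n * n - n := by
  have : Fintype.card (Dyad n) = Fintype.card (Fin n × Fin n) - Fintype.card {p : Fin n × Fin n // p.1 = p.2} :=
    Fintype.card_subtype_compl _
  have hd : Fintype.card {p : Fin n × Fin n // p.1 = p.2} = n := by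
    have e1 : {p : Fin n × Fin n // p.1 = p.2} ≃ Fin n :=
      ⟨fun p => p.1.1, fun a => ⟨(a, a), rfl⟩,
        fun ⟨⟨x, y⟩, h⟩ => by cases h; rfl, fun a => rfl⟩
    rw [Fintype.card_congr e1, Fintype.card_fin]
  simp [this, hd]

lemma card_udyad (n : ℕ) : 2 * Fintype.card (UDyad n) ≤ n * n - n := by
  have h1 := Fintype.card_le_of_injective _ (fromU_inj (n := n))
  simpa [card_dyad n, Fintype.card_prod, mul_comm] using h1

/-- For any residual vector `e`, the dyadic clustering covariance estimate
`(e eᵀ) ∘ S` has rank at most `n(n-1)/2`; in particular it is singular. -/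
theorem dyadic_clustering_estimate_singular (n : ℕ) (hn : 2 ≤ n) (e : Dyad n → ℝ) :
    (Matrix.hadamard (Matrix.vecMulVec e e) (overlapMatrix n)).rank ≤ n * (n - 1) / 2 ∧
    (Matrix.hadamard (Matrix.vecMulVec e e) (overlapMatrix n)).det = 0 := by
  set M := Matrix.hadamard (Matrix.vecMulVec e e) (overlapMatrix n) with hM
  set A : Matrix (Dyad n) (UDyad n) ℝ :=
    Matrix.of fun d u => if toU d = u then e d else 0 with hA
  set B : Matrix (UDyad n) (Dyad n) ℝ := Matrix.of fun u f =>
    e f * (if u.1.1 = f.1.1 ∨ u.1.1 = f.1.2 ∨ u.1.2 = f.1.1 ∨ u.1.2 = f.1.2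
      then (1:ℝ) else 0) with hB
  have hfac : M = A * B := by
    ext d f
    simp only [hA, hB, Matrix.mul_apply, Matrix.of_apply, ite_mul, zero_mul,
      Finset.sum_ite_eq, Finset.mem_univ, if_true]
    simp only [hM, Matrix.hadamard_apply, Matrix.vecMulVec_apply, overlapMatrix,
      Matrix.of_apply, toU]
    split_ifs with h h1 h2 h3 h4 <;> ring_nf <;> simp_all
  have hrank : M.rank ≤ Fintype.card (UDyad n) := by
    rw [hfac]
    exact (Matrix.rank_mul_le_right A B).trans B.rank_le_card_height
  have hmul : n * (n - 1) = n * n - n := Nat.mul_pred n n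
  have hcard := card_udyad n
  have h1 : M.rank ≤ n * (n - 1) / 2 := by
    refine hrank.trans ?_
    rw [Nat.le_div_iff_mul_le (by norm_num)]
    omega
  refine ⟨h1, ?_⟩
  by_contra hdet
  have hunit : IsUnit M := (Matrix.isUnit_iff_isUnit_det M).mpr (isUnit_iff_ne_zero.mpr hdet)
  have hr := Matrix.rank_of_isUnit M hunit
  have hcd : Fintype.card (Dyad n) = n * n - n := card_dyad n
  have h2 : 2 ≤ n * n - n := by
    calc 2 = 2 * 1 := by norm_num
    _ ≤ n * (n - 1) := Nat.mul_le_mul hn (by omega)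
    _ = n * n - n := hmul
  rw [hcd] at hr
  omega
end

section
/- In relational simple linear regression on n actors with centered covariates, the true variance of the OLS slope estimator is given exactly by V* = Var(β̂) = (Σ_d z_d²)^{-2} · Σ_{i=1}^{5} φ_i · Σ_{(d,d')∈Θ_i} z_d z_{d'}, where (φ_1,…,φ_5) = (σ², φ_a, φ_b, φ_c, φ_d). -/
open MeasureTheory ProbabilityTheory Filter
open scoped BigOperators Topology ENNReal NNReal

section Aux
variable {Ω : Type} [MeasureSpace Ω]

lemma integrable_mul_of_memL2 {f g : Ω → ℝ} (hf : MemLp f 2 volume) (hg : MemLp g 2 volume) :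
    Integrable (fun ω => f ω * g ω) volume := by
  rw [← memLp_one_iff_integrable]
  have h : MemLp (f • g) 1 volume := hg.smul hf (hpqr := ⟨by
    simp [one_div, ENNReal.inv_two_add_inv_two]⟩)
  exact h

lemma cov_eq_integral_mul {X Y : Ω → ℝ} (hX : ∫ ω, X ω = 0) (hY : ∫ ω, Y ω = 0) :
    cov X Y = ∫ ω, X ω * Y ω := by
  simp [cov, hX, hY]

lemma indep_mono_right {m₁ m₂ m₂' : MeasurableSpace Ω} (h : Indep m₁ m₂ volume)
    (hle : m₂' ≤ m₂) : Indep m₁ m₂' volume := by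
  rw [Indep_iff] at h ⊢
  exact fun t1 t2 ht1 ht2 => h t1 t2 ht1 (hle t2 ht2)

end Aux

/-- The ordered dyads among the first `n` actors: ordered pairs `(i,j)`, `i ≠ j`,
with `i, j ∈ {0, …, n-1}`. -/
def dyads (n : ℕ) : Finset (ℕ × ℕ) :=
  (Finset.range n ×ˢ Finset.range n).filter fun p => p.1 ≠ p.2

/-- The five configuration sets `Θ_1, …, Θ_5` of ordered dyad pairs among the first `n`
actors: identical, reciprocal, common receiver, common sender, head-to-tail. -/
def theta (n : ℕ) : Fin 5 → Finset ((ℕ × ℕ) × (ℕ × ℕ)) :=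
  ![(dyads n ×ˢ dyads n).filter fun q => q.2 = q.1,
    (dyads n ×ˢ dyads n).filter fun q => q.2.1 = q.1.2 ∧ q.2.2 = q.1.1,
    (dyads n ×ˢ dyads n).filter fun q => q.2.2 = q.1.2 ∧ q.2.1 ≠ q.1.1 ∧ q.2.1 ≠ q.1.2,
    (dyads n ×ˢ dyads n).filter fun q => q.2.1 = q.1.1 ∧ q.2.2 ≠ q.1.2 ∧ q.2.2 ≠ q.1.1,
    (dyads n ×ˢ dyads n).filter fun q =>
      (q.2.1 = q.1.2 ∧ q.2.2 ≠ q.1.1 ∧ q.2.2 ≠ q.1.2) ∨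
      (q.2.2 = q.1.1 ∧ q.2.1 ≠ q.1.1 ∧ q.2.1 ≠ q.1.2)]

/-- An exchangeable covariance structure with parameters `(σ², φa, φb, φc, φd)` on the
family `(ξ i j)_{i ≠ j, i,j < n}` of real random variables indexed by the ordered dyads
among the first `n` actors. -/
structure ExchCovOn {Ω : Type} [MeasureSpace Ω] (n : ℕ) (ξ : ℕ → ℕ → Ω → ℝ)
    (σ2 φa φb φc φd : ℝ) : Prop where
  meas : ∀ i j, Measurable (ξ i j)
  memL2 : ∀ i j, i < n → j < n → i ≠ j → MemLp (ξ i j) 2 volume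
  mean0 : ∀ i j, i < n → j < n → i ≠ j → ∫ ω, ξ i j ω = 0
  var_eq : ∀ i j, i < n → j < n → i ≠ j → cov (ξ i j) (ξ i j) = σ2
  cov_recip : ∀ i j, i < n → j < n → i ≠ j → cov (ξ i j) (ξ j i) = φa
  cov_recv : ∀ i j k, i < n → j < n → k < n → i ≠ j → k ≠ i → k ≠ j →
    cov (ξ i j) (ξ k j) = φb
  cov_send : ∀ i j k, i < n → j < n → k < n → i ≠ j → k ≠ i → k ≠ j →
    cov (ξ i j) (ξ i k) = φc
  cov_ht1 : ∀ i j k, i < n → j < n → k < n → i ≠ j → k ≠ i → k ≠ j →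
    cov (ξ i j) (ξ k i) = φd
  cov_ht2 : ∀ i j k, i < n → j < n → k < n → i ≠ j → k ≠ i → k ≠ j →
    cov (ξ i j) (ξ j k) = φd
  indep : ∀ i j, i < n → j < n → i ≠ j →
    Indep (MeasurableSpace.comap (ξ i j) inferInstance)
      (⨆ (k : ℕ) (l : ℕ) (_ : k < n) (_ : l < n) (_ : k ≠ l)
        (_ : k ≠ i) (_ : k ≠ j) (_ : l ≠ i) (_ : l ≠ j),
        MeasurableSpace.comap (ξ k l) inferInstance) volume

/-- In relational simple linear regression with centered covariates and exchangeable
errors, the true variance of the OLS slope estimator is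
`V* = (Σ z²)⁻² Σ_{i=1}^5 φ_i Σ_{(d,d′)∈Θ_i} z_d z_{d′}`. -/
theorem variance_ols_slope_exchangeable
    {Ω : Type} [MeasureSpace Ω] [IsProbabilityMeasure (volume : Measure Ω)]
    (n : ℕ) (z : ℕ × ℕ → ℝ) (β : ℝ) (ξ : ℕ → ℕ → Ω → ℝ)
    (σ2 φa φb φc φd : ℝ)
    (hexch : ExchCovOn n ξ σ2 φa φb φc φd)
    (hz0 : ∑ d ∈ dyads n, z d = 0) (hz2 : 0 < ∑ d ∈ dyads n, z d ^ 2)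
    (y : ℕ × ℕ → Ω → ℝ) (hy : ∀ d ω, y d ω = z d * β + ξ d.1 d.2 ω)
    (bhat : Ω → ℝ)
    (hbhat : ∀ ω, bhat ω = (∑ d ∈ dyads n, z d * y d ω) / ∑ d ∈ dyads n, z d ^ 2)
    :
    variance bhat volume =
      ((∑ d ∈ dyads n, z d ^ 2) ^ 2)⁻¹ *
        ∑ i : Fin 5, ![σ2, φa, φb, φc, φd] i * ∑ q ∈ theta n i, z q.1 * z q.2 := by
  classical
  set S := ∑ d ∈ dyads n, z d ^ 2 with hSdef
  have hSne : S ≠ 0 := ne_of_gt hz2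
  have hmem : ∀ d ∈ dyads n, d.1 < n ∧ d.2 < n ∧ d.1 ≠ d.2 := by
    intro d hd
    simp only [dyads, Finset.mem_filter, Finset.mem_product, Finset.mem_range] at hd
    exact ⟨hd.1.1, hd.1.2, hd.2⟩
  have hL2 : ∀ d ∈ dyads n, MemLp (ξ d.1 d.2) 2 volume := fun d hd =>
    hexch.memL2 _ _ (hmem d hd).1 (hmem d hd).2.1 (hmem d hd).2.2
  have hint : ∀ d ∈ dyads n, Integrable (ξ d.1 d.2) volume := fun d hd =>
    (hL2 d hd).integrable one_le_two
  set T : Ω → ℝ := fun ω => ∑ d ∈ dyads n, z d * ξ d.1 d.2 ω with hTdef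
  have hTL2 : MemLp T 2 volume := by
    apply memLp_finset_sum
    intro d hd; exact (hL2 d hd).const_mul _
  have hbe : bhat = fun ω => β + S⁻¹ * T ω := by
    funext ω
    rw [hbhat ω]
    have h1 : ∑ d ∈ dyads n, z d * y d ω = β * S + T ω := by
      rw [hSdef, hTdef, Finset.mul_sum, ← Finset.sum_add_distrib]
      refine Finset.sum_congr rfl fun d _ => ?_
      rw [hy d ω]; ring
    rw [h1]
    field_simp
  have hTint : Integrable T volume := by
    apply integrable_finset_sum
    intro d hd; exact (hint d hd).const_mul _
  have hTmean : ∫ ω, T ω = 0 := by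
    rw [hTdef]
    rw [integral_finset_sum _ (fun d hd => (hint d hd).const_mul _)]
    refine Finset.sum_eq_zero fun d hd => ?_
    rw [integral_const_mul, hexch.mean0 _ _ (hmem d hd).1 (hmem d hd).2.1 (hmem d hd).2.2,
      mul_zero]
  have hbmean : ∫ ω, bhat ω = β := by
    rw [hbe, integral_add (integrable_const β) (hTint.const_mul _), integral_const,
      integral_const_mul _ T, hTmean]
    simp
  have hbL2 : MemLp bhat 2 volume := by
    rw [hbe]; exact (memLp_const β).add (hTL2.const_mul S⁻¹)
  -- variance as integral
  have hvar : variance bhat volume = S⁻¹ ^ 2 * ∫ ω, (T ω) ^ 2 := by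
    rw [(show variance bhat volume = ∫ ω, ((bhat - fun _ => ∫ ω', bhat ω') ^ (2 : ℕ) : Ω → ℝ) ω from by
      rw [variance_eq_integral hbL2.aemeasurable]; rfl), hbmean]
    have h2 : ∀ ω, ((bhat - fun _ : Ω => β) ^ (2 : ℕ)) ω = S⁻¹ ^ 2 * (T ω) ^ 2 := by
      intro ω
      simp only [Pi.pow_apply, Pi.sub_apply, hbe]
      ring
    simp only [h2]
    rw [integral_const_mul]
  -- expand ∫ T²
  have hmul_int : ∀ d ∈ dyads n, ∀ d' ∈ dyads n,
      Integrable (fun ω => (z d * z d') * (ξ d.1 d.2 ω * ξ d'.1 d'.2 ω)) volume :=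
    fun d hd d' hd' => (integrable_mul_of_memL2 (hL2 d hd) (hL2 d' hd')).const_mul _
  have hTsq : ∫ ω, (T ω) ^ 2 =
      ∑ d ∈ dyads n, ∑ d' ∈ dyads n,
        (z d * z d') * ∫ ω, ξ d.1 d.2 ω * ξ d'.1 d'.2 ω := by
    have expand : ∀ ω, (T ω) ^ 2 = ∑ d ∈ dyads n, ∑ d' ∈ dyads n,
        (z d * z d') * (ξ d.1 d.2 ω * ξ d'.1 d'.2 ω) := by
      intro ω
      rw [hTdef]
      simp only [pow_two, Finset.sum_mul_sum]
      exact Finset.sum_congr rfl fun d _ => Finset.sum_congr rfl fun d' _ => by ring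
    simp_rw [expand]
    rw [integral_finset_sum _ (fun d hd => integrable_finset_sum _ (fun d' hd' =>
      hmul_int d hd d' hd'))]
    refine Finset.sum_congr rfl fun d hd => ?_
    rw [integral_finset_sum _ (fun d' hd' => hmul_int d hd d' hd')]
    exact Finset.sum_congr rfl fun d' _ => integral_const_mul _ _
  -- covariance values
  have hzero : ∀ j k l m : ℕ, j < n → k < n → l < n → m < n → j ≠ k → l ≠ m →
      l ≠ j → l ≠ k → m ≠ j → m ≠ k → cov (ξ j k) (ξ l m) = 0 := by
    intro j k l m hj hk hl hm hjk hlm hlj hlk hmj hmk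
    have hI := hexch.indep j k hj hk hjk
    have hle : MeasurableSpace.comap (ξ l m) inferInstance ≤
        (⨆ (k' : ℕ) (l' : ℕ) (_ : k' < n) (_ : l' < n) (_ : k' ≠ l')
          (_ : k' ≠ j) (_ : k' ≠ k) (_ : l' ≠ j) (_ : l' ≠ k),
          MeasurableSpace.comap (ξ k' l') inferInstance) :=
      le_iSup_of_le l <| le_iSup_of_le m <| le_iSup_of_le hl <| le_iSup_of_le hm <|
        le_iSup_of_le hlm <| le_iSup_of_le hlj <| le_iSup_of_le hlk <|
        le_iSup_of_le hmj <| le_iSup_of_le hmk le_rfl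
    have hIF : IndepFun (ξ j k) (ξ l m) volume :=
      (IndepFun_iff_Indep _ _ _).mpr (indep_mono_right hI hle)
    rw [cov_eq_integral_mul (hexch.mean0 _ _ hj hk hjk) (hexch.mean0 _ _ hl hm hlm),
      IndepFun.integral_fun_mul_eq_mul_integral hIF (hexch.meas j k).aestronglyMeasurable
        (hexch.meas l m).aestronglyMeasurable,
      hexch.mean0 _ _ hj hk hjk, zero_mul]
  have hval : ∀ j k l m : ℕ, j < n → k < n → l < n → m < n → j ≠ k → l ≠ m →
      cov (ξ j k) (ξ l m) =
        (if (l, m) = (j, k) then σ2 else 0) +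
        (if l = k ∧ m = j then φa else 0) +
        (if m = k ∧ l ≠ j ∧ l ≠ k then φb else 0) +
        (if l = j ∧ m ≠ k ∧ m ≠ j then φc else 0) +
        (if (l = k ∧ m ≠ j ∧ m ≠ k) ∨ (m = j ∧ l ≠ j ∧ l ≠ k) then φd else 0) := by
    intro j k l m hj hk hl hm hjk hlm
    by_cases hlj : l = j
    · subst hlj
      by_cases hmk : m = k
      · subst hmk
        rw [hexch.var_eq _ _ hj hk hjk]
        simp [Prod.ext_iff, hjk, Ne.symm hjk]
      · have hmj : m ≠ l := Ne.symm hlm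
        rw [hexch.cov_send _ _ _ hj hk hm hjk hmj hmk]
        simp [Prod.ext_iff, hjk, Ne.symm hjk, hmk, hmj]
    · by_cases hlk : l = k
      · subst hlk
        by_cases hmj : m = j
        · subst hmj
          rw [hexch.cov_recip _ _ hj hk hjk]
          simp [Prod.ext_iff, hjk, Ne.symm hjk, hlj]
        · have hmk : m ≠ l := Ne.symm hlm
          rw [hexch.cov_ht2 _ _ _ hj hk hm hjk hmj hmk]
          simp [Prod.ext_iff, hjk, Ne.symm hjk, hlj, hmj, hmk]
      · by_cases hmj : m = j
        · subst hmj
          rw [hexch.cov_ht1 _ _ _ hj hk hl hjk hlj hlk]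
          simp [Prod.ext_iff, hjk, Ne.symm hjk, hlj, hlk]
        · by_cases hmk : m = k
          · subst hmk
            rw [hexch.cov_recv _ _ _ hj hk hl hjk hlj hlk]
            simp [Prod.ext_iff, hjk, Ne.symm hjk, hlj, hlk, hmj]
          · rw [hzero j k l m hj hk hl hm hjk hlm hlj hlk hmj hmk]
            simp [Prod.ext_iff, hlj, hlk, hmj, hmk]
  -- assemble
  rw [hvar, hTsq]
  have hcovint : ∀ d ∈ dyads n, ∀ d' ∈ dyads n,
      ∫ ω, ξ d.1 d.2 ω * ξ d'.1 d'.2 ω = cov (ξ d.1 d.2) (ξ d'.1 d'.2) := by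
    intro d hd d' hd'
    rw [cov_eq_integral_mul (hexch.mean0 _ _ (hmem d hd).1 (hmem d hd).2.1 (hmem d hd).2.2)
      (hexch.mean0 _ _ (hmem d' hd').1 (hmem d' hd').2.1 (hmem d' hd').2.2)]
  have hsum : ∑ d ∈ dyads n, ∑ d' ∈ dyads n,
      (z d * z d') * ∫ ω, ξ d.1 d.2 ω * ξ d'.1 d'.2 ω =
      ∑ i : Fin 5, ![σ2, φa, φb, φc, φd] i * ∑ q ∈ theta n i, z q.1 * z q.2 := by
    rw [Fin.sum_univ_five]
    have e0 : theta n 0 = (dyads n ×ˢ dyads n).filter fun q => q.2 = q.1 := rfl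
    have e1 : theta n 1 = (dyads n ×ˢ dyads n).filter
        fun q => q.2.1 = q.1.2 ∧ q.2.2 = q.1.1 := rfl
    have e2 : theta n 2 = (dyads n ×ˢ dyads n).filter
        fun q => q.2.2 = q.1.2 ∧ q.2.1 ≠ q.1.1 ∧ q.2.1 ≠ q.1.2 := rfl
    have e3 : theta n 3 = (dyads n ×ˢ dyads n).filter
        fun q => q.2.1 = q.1.1 ∧ q.2.2 ≠ q.1.2 ∧ q.2.2 ≠ q.1.1 := rfl
    have e4 : theta n 4 = (dyads n ×ˢ dyads n).filter fun q =>
        (q.2.1 = q.1.2 ∧ q.2.2 ≠ q.1.1 ∧ q.2.2 ≠ q.1.2) ∨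
        (q.2.2 = q.1.1 ∧ q.2.1 ≠ q.1.1 ∧ q.2.1 ≠ q.1.2) := rfl
    have v0 : (![σ2, φa, φb, φc, φd] : Fin 5 → ℝ) 0 = σ2 := rfl
    have v1 : (![σ2, φa, φb, φc, φd] : Fin 5 → ℝ) 1 = φa := rfl
    have v2 : (![σ2, φa, φb, φc, φd] : Fin 5 → ℝ) 2 = φb := rfl
    have v3 : (![σ2, φa, φb, φc, φd] : Fin 5 → ℝ) 3 = φc := rfl
    have v4 : (![σ2, φa, φb, φc, φd] : Fin 5 → ℝ) 4 = φd := rfl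
    rw [e0, e1, e2, e3, e4, v0, v1, v2, v3, v4,
      Finset.sum_filter, Finset.sum_filter, Finset.sum_filter, Finset.sum_filter,
      Finset.sum_filter, Finset.mul_sum, Finset.mul_sum, Finset.mul_sum, Finset.mul_sum,
      Finset.mul_sum, ← Finset.sum_add_distrib, ← Finset.sum_add_distrib,
      ← Finset.sum_add_distrib, ← Finset.sum_add_distrib, ← Finset.sum_product']
    refine Finset.sum_congr rfl fun q hq => ?_
    obtain ⟨⟨j, k⟩, ⟨l, m⟩⟩ := q
    rw [Finset.mem_product] at hq
    obtain ⟨hd1, hd2⟩ := hq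
    obtain ⟨hj, hk, hjk⟩ := hmem _ hd1
    obtain ⟨hl, hm, hlm⟩ := hmem _ hd2
    rw [hcovint _ hd1 _ hd2, hval j k l m hj hk hl hm hjk hlm]
    simp only []
    split_ifs <;> ring
  rw [hsum, inv_pow]
end

section
/- Under the bilinear mixed-effects error model, for pairwise distinct indices i, j, k, l the errors ξ_{ij} have mean zero and covariances: Var(ξ_{ij}) = σ_a² + σ_b² + d·σ_z⁴ + σ_γ² + σ_ε²; Cov(ξ_{ij}, ξ_{ji}) = 2ρσ_aσ_b + d·σ_z⁴ + σ_γ²; Cov(ξ_{ij}, ξ_{il}) = σ_a²; Cov(ξ_{ij}, ξ_{kj}) = σ_b²; Cov(ξ_{ij}, ξ_{ki}) = ρσ_aσ_b; and Cov(ξ_{ij}, ξ_{kl}) = 0. -/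
open MeasureTheory ProbabilityTheory Filter
open scoped BigOperators Topology ENNReal NNReal

namespace BME

variable {Ω : Type} [MeasureSpace Ω] [IsProbabilityMeasure (volume : Measure Ω)]

/-- the dot product of latent vectors, as an opaque function -/
noncomputable def dot {n d : ℕ} (z : Fin n → Ω → Fin d → ℝ) (p q : Fin n) : Ω → ℝ :=
  fun ω => ∑ m, z p ω m * z q ω m

lemma mul_int {f g : Ω → ℝ} (hf : MemLp f 2 volume) (hg : MemLp g 2 volume) :
    Integrable (fun ω => f ω * g ω) volume := by
  exact MemLp.integrable_mul hf hg

lemma cov_eq {X Y : Ω → ℝ} (hX : ∫ ω, X ω = 0) (hY : ∫ ω, Y ω = 0) :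
    cov X Y = ∫ ω, X ω * Y ω := by
  unfold cov; rw [hX, hY]; simp

lemma indep_int_zero {X Y : Ω → ℝ} (h : IndepFun X Y volume)
    (hX : AEStronglyMeasurable X volume) (hY : AEStronglyMeasurable Y volume)
    (h0 : ∫ ω, X ω = 0) : ∫ ω, X ω * Y ω = 0 := by
  have h2 := h.integral_mul_eq_mul_integral hX hY
  rw [h0, zero_mul] at h2
  exact h2

lemma indep_int_zero' {X Y : Ω → ℝ} (h : IndepFun X Y volume)
    (hX : AEStronglyMeasurable X volume) (hY : AEStronglyMeasurable Y volume)
    (h0 : ∫ ω, Y ω = 0) : ∫ ω, X ω * Y ω = 0 := by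
  have h2 := h.integral_mul_eq_mul_integral hX hY
  rw [h0, mul_zero] at h2
  exact h2

lemma integral_sum5_mul (T U : Fin 5 → Ω → ℝ)
    (h : ∀ p q, Integrable (fun ω => T p ω * U q ω) volume) :
    ∫ ω, (∑ p, T p ω) * (∑ q, U q ω) = ∑ p, ∑ q, ∫ ω, T p ω * U q ω := by
  have he : ∀ ω, (∑ p, T p ω) * (∑ q, U q ω) = ∑ p, ∑ q, T p ω * U q ω := fun ω => by
    rw [Finset.sum_mul_sum]
  simp_rw [he]
  rw [integral_finset_sum _ (fun p _ => integrable_finset_sum _ (fun q _ => h p q))]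
  exact Finset.sum_congr rfl fun p _ => integral_finset_sum _ fun q _ => h p q

lemma indepFun_of_fam {m₁ m₂ : MeasurableSpace Ω} {X Y : Ω → ℝ}
    (h : Indep (Ω := Ω) m₁ m₂ (_mΩ := MeasureSpace.toMeasurableSpace) volume)
    (hX : Measurable[m₁] X) (hY : Measurable[m₂] Y) : IndepFun X Y volume := by
  rw [IndepFun_iff_Indep]
  exact indep_of_indep_of_le_left (indep_of_indep_of_le_right h hY.comap_le) hX.comap_le

end BME


set_option maxHeartbeats 2000000 in
/-- Under the bilinear mixed-effects error model
`ξ_{ij} = a_i + b_j + z_i·z_j + γ_{(ij)} + ε_{ij}`, for pairwise distinct `i, j, k, l` the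
errors have mean zero and the six covariance values of the exchangeable structure are as
computed by Hoff (2005). -/
theorem bilinear_mixed_effects_covariances {Ω : Type} [MeasureSpace Ω]
    [IsProbabilityMeasure (volume : Measure Ω)]
    (n d : ℕ) (a b : Fin n → Ω → ℝ) (z : Fin n → Ω → Fin d → ℝ)
    (γ ε : Fin n → Fin n → Ω → ℝ)
    (σa σb σz σγ σε ρ : ℝ)
    -- measurability and integrability
    (hmeas_a : ∀ i, Measurable (a i)) (hmeas_b : ∀ i, Measurable (b i))
    (hmeas_z : ∀ i, Measurable (z i))
    (hmeas_γ : ∀ i j, Measurable (γ i j)) (hmeas_ε : ∀ i j, Measurable (ε i j))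
    (ha_L2 : ∀ i, MemLp (a i) 2 volume) (hb_L2 : ∀ i, MemLp (b i) 2 volume)
    (hz_L2 : ∀ i m, MemLp (fun ω => z i ω m) 2 volume)
    (hγ_L2 : ∀ i j, MemLp (γ i j) 2 volume) (hε_L2 : ∀ i j, MemLp (ε i j) 2 volume)
    -- additive sender/receiver effects
    (ha_mean : ∀ i, ∫ ω, a i ω = 0) (hb_mean : ∀ i, ∫ ω, b i ω = 0)
    (ha_var : ∀ i, cov (a i) (a i) = σa ^ 2) (hb_var : ∀ i, cov (b i) (b i) = σb ^ 2)
    (hab_cov : ∀ i, cov (a i) (b i) = ρ * σa * σb)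
    (hab_indep : iIndepFun (fun i ω => (a i ω, b i ω)) volume)
    -- multiplicative latent positions
    (hz_mean : ∀ i m, ∫ ω, z i ω m = 0)
    (hz_var : ∀ i m, cov (fun ω => z i ω m) (fun ω => z i ω m) = σz ^ 2)
    (hz_comp_indep : ∀ i, iIndepFun (fun m ω => z i ω m) volume)
    (hz_indep : iIndepFun z volume)
    -- symmetric pair effects
    (hγ_symm : ∀ i j, γ i j = γ j i)
    (hγ_mean : ∀ i j, ∫ ω, γ i j ω = 0)
    (hγ_var : ∀ i j, cov (γ i j) (γ i j) = σγ ^ 2)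
    (hγ_indep : iIndepFun
      (fun (q : {q : Fin n × Fin n // q.1 < q.2}) ω => γ q.1.1 q.1.2 ω) volume)
    -- idiosyncratic noise
    (hε_mean : ∀ i j, ∫ ω, ε i j ω = 0)
    (hε_var : ∀ i j, cov (ε i j) (ε i j) = σε ^ 2)
    (hε_indep : iIndepFun
      (fun (q : {q : Fin n × Fin n // q.1 ≠ q.2}) ω => ε q.1.1 q.1.2 ω) volume)
    -- the four families are mutually independent
    (hfam : iIndep
      (![⨆ i, MeasurableSpace.comap (fun ω => (a i ω, b i ω)) inferInstance,
         ⨆ i, MeasurableSpace.comap (z i) inferInstance,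
         ⨆ i, ⨆ j, MeasurableSpace.comap (γ i j) inferInstance,
         ⨆ i, ⨆ j, MeasurableSpace.comap (ε i j) inferInstance]) volume)
    -- the error array
    (ξ : Fin n → Fin n → Ω → ℝ)
    (hξ : ∀ i j ω, ξ i j ω =
      a i ω + b j ω + (∑ m, z i ω m * z j ω m) + γ i j ω + ε i j ω) :
    ∀ i j k l : Fin n, i ≠ j → i ≠ k → i ≠ l → j ≠ k → j ≠ l → k ≠ l →
      (∫ ω, ξ i j ω = 0) ∧
      cov (ξ i j) (ξ i j) = σa ^ 2 + σb ^ 2 + (d : ℝ) * σz ^ 4 + σγ ^ 2 + σε ^ 2 ∧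
      cov (ξ i j) (ξ j i) = 2 * ρ * σa * σb + (d : ℝ) * σz ^ 4 + σγ ^ 2 ∧
      cov (ξ i j) (ξ i l) = σa ^ 2 ∧
      cov (ξ i j) (ξ k j) = σb ^ 2 ∧
      cov (ξ i j) (ξ k i) = ρ * σa * σb ∧
      cov (ξ i j) (ξ k l) = 0 := by
  intro i j k l hij hik hil hjk hjl hkl
  classical

  -- abbreviations
  have hmz : ∀ p m, Measurable fun ω => z p ω m := fun p m =>
    (measurable_pi_apply m).comp (hmeas_z p)
  have hmdot : ∀ p q, Measurable (BME.dot z p q) := fun p q =>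
    Finset.measurable_sum _ fun m _ => (hmz p m).mul (hmz q m)
  have hint_a : ∀ p, Integrable (a p) volume := fun p => (ha_L2 p).integrable one_le_two
  have hint_b : ∀ p, Integrable (b p) volume := fun p => (hb_L2 p).integrable one_le_two
  have hint_γ : ∀ p q, Integrable (γ p q) volume := fun p q => (hγ_L2 p q).integrable one_le_two
  have hint_ε : ∀ p q, Integrable (ε p q) volume := fun p q => (hε_L2 p q).integrable one_le_two
  have hint_zz : ∀ (p q : Fin n) (m m' : Fin d),
      Integrable (fun ω => z p ω m * z q ω m') volume := fun p q m m' =>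
    BME.mul_int (hz_L2 p m) (hz_L2 q m')
  have hzf : ∀ p q, p ≠ q → IndepFun (z p) (z q) volume := fun p q h => hz_indep.indepFun h
  -- z second moments
  have hzm2_same : ∀ p m, ∫ ω, z p ω m * z p ω m = σz ^ 2 := fun p m => by
    rw [← BME.cov_eq (hz_mean p m) (hz_mean p m)]; exact hz_var p m
  have hzm2_diff : ∀ p m m', m ≠ m' → ∫ ω, z p ω m * z p ω m' = 0 := fun p m m' h =>
    BME.indep_int_zero ((hz_comp_indep p).indepFun h) (hmz p m).aestronglyMeasurable
      (hmz p m').aestronglyMeasurable (hz_mean p m)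
  -- mean of dot
  have hdot_mean : ∀ p q, p ≠ q → ∫ ω, BME.dot z p q ω = 0 := by
    intro p q h
    show ∫ ω, ∑ m, z p ω m * z q ω m = 0
    rw [integral_finset_sum _ fun m _ => hint_zz p q m m]
    refine Finset.sum_eq_zero fun m _ => ?_
    exact BME.indep_int_zero ((hzf p q h).comp (measurable_pi_apply m) (measurable_pi_apply m))
      (hmz p m).aestronglyMeasurable (hmz q m).aestronglyMeasurable (hz_mean p m)
  have hgmm : ∀ m m' : Fin d, Measurable fun v : Fin d → ℝ => v m * v m' := fun m m' =>
    (measurable_pi_apply m).mul (measurable_pi_apply m')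
  have hint4 : ∀ (p q : Fin n), p ≠ q → ∀ (m m' : Fin d),
      Integrable (fun ω => (z p ω m * z p ω m') * (z q ω m * z q ω m')) volume := by
    intro p q h m m'
    exact ((hzf p q h).comp (hgmm m m') (hgmm m m')).integrable_mul
      (hint_zz p p m m') (hint_zz q q m m')
  have hdot_sq_expand : ∀ (p q : Fin n) (ω : Ω), BME.dot z p q ω * BME.dot z p q ω =
      ∑ m, ∑ m', (z p ω m * z p ω m') * (z q ω m * z q ω m') := by
    intro p q ω
    rw [show BME.dot z p q ω = ∑ m, z p ω m * z q ω m from rfl, Finset.sum_mul_sum]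
    exact Finset.sum_congr rfl fun m _ => Finset.sum_congr rfl fun m' _ => by ring
  -- dot is L2
  have hdot_L2 : ∀ p q, p ≠ q → MemLp (BME.dot z p q) 2 volume := by
    intro p q h
    rw [memLp_two_iff_integrable_sq (hmdot p q).aestronglyMeasurable]
    have he : ∀ ω, BME.dot z p q ω ^ 2
        = ∑ m, ∑ m', (z p ω m * z p ω m') * (z q ω m * z q ω m') := fun ω => by
      rw [sq]; exact hdot_sq_expand p q ω
    simp_rw [he]
    exact integrable_finset_sum _ fun m _ => integrable_finset_sum _ fun m' _ => hint4 p q h m m'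
  have hint_dot : ∀ p q, p ≠ q → Integrable (BME.dot z p q) volume := fun p q h =>
    (hdot_L2 p q h).integrable one_le_two
  -- ∫ dot·dot (same pair)
  have hdd_same : ∀ p q, p ≠ q →
      ∫ ω, BME.dot z p q ω * BME.dot z p q ω = (d : ℝ) * σz ^ 4 := by
    intro p q h
    simp_rw [hdot_sq_expand p q]
    rw [integral_finset_sum _ fun m _ => integrable_finset_sum _ fun m' _ => hint4 p q h m m']
    have hterm : ∀ m m' : Fin d, ∫ ω, (z p ω m * z p ω m') * (z q ω m * z q ω m')
        = if m = m' then σz ^ 2 * σz ^ 2 else 0 := by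
      intro m m'
      have h2 : ∫ ω, (z p ω m * z p ω m') * (z q ω m * z q ω m')
          = (∫ ω, z p ω m * z p ω m') * ∫ ω, z q ω m * z q ω m' :=
        (((hzf p q h).comp (hgmm m m') (hgmm m m'))).integral_mul_eq_mul_integral
          ((hmz p m).mul (hmz p m')).aestronglyMeasurable
          ((hmz q m).mul (hmz q m')).aestronglyMeasurable
      by_cases hmm : m = m'
      · subst hmm
        rw [h2, hzm2_same, hzm2_same]; simp
      · rw [h2, hzm2_diff p m m' hmm, zero_mul]; simp [hmm]
    have hswap : (∑ m : Fin d, ∫ ω, ∑ m' : Fin d, (z p ω m * z p ω m') * (z q ω m * z q ω m'))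
        = ∑ m : Fin d, ∑ m' : Fin d, ∫ ω, (z p ω m * z p ω m') * (z q ω m * z q ω m') :=
      Finset.sum_congr rfl fun m _ => integral_finset_sum _ fun m' _ => hint4 p q h m m'
    rw [hswap]
    have hrow : ∀ m : Fin d,
        (∑ m' : Fin d, ∫ ω, (z p ω m * z p ω m') * (z q ω m * z q ω m'))
          = σz ^ 2 * σz ^ 2 := fun m => by
      rw [Finset.sum_congr rfl fun m' _ => hterm m m']
      simp
    rw [Finset.sum_congr rfl fun m _ => hrow m, Finset.sum_const, Finset.card_univ,
      Fintype.card_fin, nsmul_eq_mul]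
    ring
  -- ∫ dot·dot (shared first index, lone second indices)
  have hdd_shared : ∀ p q r, p ≠ q → q ≠ r → p ≠ r →
      ∫ ω, BME.dot z p q ω * BME.dot z p r ω = 0 := by
    intro p q r hpq hqr hpr
    have he : ∀ ω, BME.dot z p q ω * BME.dot z p r ω
        = ∑ m, ∑ m', z q ω m * (z p ω m * z p ω m' * z r ω m') := fun ω => by
      rw [show BME.dot z p q ω = ∑ m, z p ω m * z q ω m from rfl,
        show BME.dot z p r ω = ∑ m', z p ω m' * z r ω m' from rfl, Finset.sum_mul_sum]
      exact Finset.sum_congr rfl fun m _ => Finset.sum_congr rfl fun m' _ => by ring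
    have hind : ∀ m m' : Fin d, IndepFun (fun ω => z q ω m)
        (fun ω => z p ω m * z p ω m' * z r ω m') volume := by
      intro m m'
      have h1 : IndepFun (fun ω => (z p ω, z r ω)) (z q) volume :=
        hz_indep.indepFun_prodMk hmeas_z p r q hpq hqr.symm
      exact h1.symm.comp (measurable_pi_apply m)
        ((((measurable_pi_apply m).comp measurable_fst).mul
          ((measurable_pi_apply m').comp measurable_fst)).mul
          ((measurable_pi_apply m').comp measurable_snd))
    have hmY : ∀ m m' : Fin d, Measurable fun ω => z p ω m * z p ω m' * z r ω m' :=
      fun m m' => ((hmz p m).mul (hmz p m')).mul (hmz r m')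
    have hintterm : ∀ m m' : Fin d,
        Integrable (fun ω => z q ω m * (z p ω m * z p ω m' * z r ω m')) volume := by
      intro m m'
      have h2 : IndepFun (fun ω => z p ω m * z p ω m') (fun ω => z r ω m') volume :=
        (hzf p r hpr).comp (hgmm m m') (measurable_pi_apply m')
      have hY : Integrable (fun ω => z p ω m * z p ω m' * z r ω m') volume :=
        h2.integrable_mul (hint_zz p p m m') ((hz_L2 r m').integrable one_le_two)
      exact (hind m m').integrable_mul ((hz_L2 q m).integrable one_le_two) hY
    simp_rw [he]
    rw [integral_finset_sum _ fun m _ => integrable_finset_sum _ fun m' _ => hintterm m m']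
    refine Finset.sum_eq_zero fun m _ => ?_
    rw [integral_finset_sum _ fun m' _ => hintterm m m']
    refine Finset.sum_eq_zero fun m' _ => ?_
    exact BME.indep_int_zero (hind m m') (hmz q m).aestronglyMeasurable
      (hmY m m').aestronglyMeasurable (hz_mean q m)
  -- ∫ dot·dot (disjoint pairs)
  have hdd_disj : ∀ p q r s, p ≠ q → p ≠ r → p ≠ s → q ≠ r → q ≠ s →
      ∫ ω, BME.dot z p q ω * BME.dot z r s ω = 0 := by
    intro p q r s hpq hpr hps hqr hqs
    have hg : Measurable fun vw : (Fin d → ℝ) × (Fin d → ℝ) => ∑ m, vw.1 m * vw.2 m :=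
      Finset.measurable_sum _ fun m _ =>
        ((measurable_pi_apply m).comp measurable_fst).mul
          ((measurable_pi_apply m).comp measurable_snd)
    have h1 : IndepFun (BME.dot z p q) (BME.dot z r s) volume :=
      (hz_indep.indepFun_prodMk_prodMk hmeas_z p q r s hpr hps hqr hqs).comp hg hg
    exact BME.indep_int_zero h1 (hmdot p q).aestronglyMeasurable
      (hmdot r s).aestronglyMeasurable (hdot_mean p q hpq)
  have hdot_symm : ∀ p q, BME.dot z p q = BME.dot z q p := fun p q =>
    funext fun ω => Finset.sum_congr rfl fun m _ => mul_comm _ _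
  -- measurable w.r.t. family σ-algebras
  have hMpair : ∀ p, Measurable[⨆ i, MeasurableSpace.comap
      (fun ω => (a i ω, b i ω)) inferInstance] (fun ω => (a p ω, b p ω)) := fun p => by
    rw [measurable_iff_comap_le]
    exact le_iSup (fun i => MeasurableSpace.comap (fun ω => (a i ω, b i ω)) inferInstance) p
  have hMa : ∀ p, Measurable[⨆ i, MeasurableSpace.comap
      (fun ω => (a i ω, b i ω)) inferInstance] (a p) := fun p => measurable_fst.comp (hMpair p)
  have hMb : ∀ p, Measurable[⨆ i, MeasurableSpace.comap
      (fun ω => (a i ω, b i ω)) inferInstance] (b p) := fun p => measurable_snd.comp (hMpair p)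
  have hMz : ∀ p, Measurable[⨆ i, MeasurableSpace.comap (z i) inferInstance] (z p) := fun p => by
    rw [measurable_iff_comap_le]
    exact le_iSup (fun i => MeasurableSpace.comap (z i) inferInstance) p
  have hMdot : ∀ p q, Measurable[⨆ i, MeasurableSpace.comap (z i) inferInstance]
      (BME.dot z p q) := fun p q =>
    Finset.measurable_sum _ fun m _ =>
      ((measurable_pi_apply m).comp (hMz p)).mul ((measurable_pi_apply m).comp (hMz q))
  have hMγ : ∀ p q, Measurable[⨆ i, ⨆ j, MeasurableSpace.comap (γ i j) inferInstance]
      (γ p q) := fun p q => by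
    rw [measurable_iff_comap_le]
    exact le_iSup₂ (f := fun i j => MeasurableSpace.comap (γ i j) inferInstance) p q
  have hMε : ∀ p q, Measurable[⨆ i, ⨆ j, MeasurableSpace.comap (ε i j) inferInstance]
      (ε p q) := fun p q => by
    rw [measurable_iff_comap_le]
    exact le_iSup₂ (f := fun i j => MeasurableSpace.comap (ε i j) inferInstance) p q
  -- cross-family independence
  have hFI : ∀ (u v : Fin 4), u ≠ v → ∀ {X Y : Ω → ℝ},
      Measurable[(![⨆ i, MeasurableSpace.comap (fun ω => (a i ω, b i ω)) inferInstance,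
         ⨆ i, MeasurableSpace.comap (z i) inferInstance,
         ⨆ i, ⨆ j, MeasurableSpace.comap (γ i j) inferInstance,
         ⨆ i, ⨆ j, MeasurableSpace.comap (ε i j) inferInstance] : Fin 4 → MeasurableSpace Ω) u] X →
      Measurable[(![⨆ i, MeasurableSpace.comap (fun ω => (a i ω, b i ω)) inferInstance,
         ⨆ i, MeasurableSpace.comap (z i) inferInstance,
         ⨆ i, ⨆ j, MeasurableSpace.comap (γ i j) inferInstance,
         ⨆ i, ⨆ j, MeasurableSpace.comap (ε i j) inferInstance] : Fin 4 → MeasurableSpace Ω) v] Y →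
      IndepFun X Y volume := fun u v huv X Y hX hY =>
    BME.indepFun_of_fam (hfam.indep huv) hX hY
  -- cross-family zero integrals (all generic in indices)
  have haW : ∀ p q r, ∫ ω, a p ω * BME.dot z q r ω = 0 := fun p q r =>
    BME.indep_int_zero (hFI 0 1 (by decide) (hMa p) (hMdot q r))
      (hmeas_a p).aestronglyMeasurable (hmdot q r).aestronglyMeasurable (ha_mean p)
  have haγ : ∀ p q r, ∫ ω, a p ω * γ q r ω = 0 := fun p q r =>
    BME.indep_int_zero (hFI 0 2 (by decide) (hMa p) (hMγ q r))
      (hmeas_a p).aestronglyMeasurable (hmeas_γ q r).aestronglyMeasurable (ha_mean p)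
  have haε : ∀ p q r, ∫ ω, a p ω * ε q r ω = 0 := fun p q r =>
    BME.indep_int_zero (hFI 0 3 (by decide) (hMa p) (hMε q r))
      (hmeas_a p).aestronglyMeasurable (hmeas_ε q r).aestronglyMeasurable (ha_mean p)
  have hbW : ∀ p q r, ∫ ω, b p ω * BME.dot z q r ω = 0 := fun p q r =>
    BME.indep_int_zero (hFI 0 1 (by decide) (hMb p) (hMdot q r))
      (hmeas_b p).aestronglyMeasurable (hmdot q r).aestronglyMeasurable (hb_mean p)
  have hbγ : ∀ p q r, ∫ ω, b p ω * γ q r ω = 0 := fun p q r =>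
    BME.indep_int_zero (hFI 0 2 (by decide) (hMb p) (hMγ q r))
      (hmeas_b p).aestronglyMeasurable (hmeas_γ q r).aestronglyMeasurable (hb_mean p)
  have hbε : ∀ p q r, ∫ ω, b p ω * ε q r ω = 0 := fun p q r =>
    BME.indep_int_zero (hFI 0 3 (by decide) (hMb p) (hMε q r))
      (hmeas_b p).aestronglyMeasurable (hmeas_ε q r).aestronglyMeasurable (hb_mean p)
  have hWa : ∀ p q r, ∫ ω, BME.dot z p q ω * a r ω = 0 := fun p q r =>
    BME.indep_int_zero' (hFI 1 0 (by decide) (hMdot p q) (hMa r))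
      (hmdot p q).aestronglyMeasurable (hmeas_a r).aestronglyMeasurable (ha_mean r)
  have hWb : ∀ p q r, ∫ ω, BME.dot z p q ω * b r ω = 0 := fun p q r =>
    BME.indep_int_zero' (hFI 1 0 (by decide) (hMdot p q) (hMb r))
      (hmdot p q).aestronglyMeasurable (hmeas_b r).aestronglyMeasurable (hb_mean r)
  have hWγ : ∀ p q r s, ∫ ω, BME.dot z p q ω * γ r s ω = 0 := fun p q r s =>
    BME.indep_int_zero' (hFI 1 2 (by decide) (hMdot p q) (hMγ r s))
      (hmdot p q).aestronglyMeasurable (hmeas_γ r s).aestronglyMeasurable (hγ_mean r s)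
  have hWε : ∀ p q r s, ∫ ω, BME.dot z p q ω * ε r s ω = 0 := fun p q r s =>
    BME.indep_int_zero' (hFI 1 3 (by decide) (hMdot p q) (hMε r s))
      (hmdot p q).aestronglyMeasurable (hmeas_ε r s).aestronglyMeasurable (hε_mean r s)
  have hγa : ∀ p q r, ∫ ω, γ p q ω * a r ω = 0 := fun p q r =>
    BME.indep_int_zero (hFI 2 0 (by decide) (hMγ p q) (hMa r))
      (hmeas_γ p q).aestronglyMeasurable (hmeas_a r).aestronglyMeasurable (hγ_mean p q)
  have hγb : ∀ p q r, ∫ ω, γ p q ω * b r ω = 0 := fun p q r =>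
    BME.indep_int_zero (hFI 2 0 (by decide) (hMγ p q) (hMb r))
      (hmeas_γ p q).aestronglyMeasurable (hmeas_b r).aestronglyMeasurable (hγ_mean p q)
  have hγW : ∀ p q r s, ∫ ω, γ p q ω * BME.dot z r s ω = 0 := fun p q r s =>
    BME.indep_int_zero (hFI 2 1 (by decide) (hMγ p q) (hMdot r s))
      (hmeas_γ p q).aestronglyMeasurable (hmdot r s).aestronglyMeasurable (hγ_mean p q)
  have hγε : ∀ p q r s, ∫ ω, γ p q ω * ε r s ω = 0 := fun p q r s =>
    BME.indep_int_zero (hFI 2 3 (by decide) (hMγ p q) (hMε r s))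
      (hmeas_γ p q).aestronglyMeasurable (hmeas_ε r s).aestronglyMeasurable (hγ_mean p q)
  have hεa : ∀ p q r, ∫ ω, ε p q ω * a r ω = 0 := fun p q r =>
    BME.indep_int_zero (hFI 3 0 (by decide) (hMε p q) (hMa r))
      (hmeas_ε p q).aestronglyMeasurable (hmeas_a r).aestronglyMeasurable (hε_mean p q)
  have hεb : ∀ p q r, ∫ ω, ε p q ω * b r ω = 0 := fun p q r =>
    BME.indep_int_zero (hFI 3 0 (by decide) (hMε p q) (hMb r))
      (hmeas_ε p q).aestronglyMeasurable (hmeas_b r).aestronglyMeasurable (hε_mean p q)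
  have hεW : ∀ p q r s, ∫ ω, ε p q ω * BME.dot z r s ω = 0 := fun p q r s =>
    BME.indep_int_zero (hFI 3 1 (by decide) (hMε p q) (hMdot r s))
      (hmeas_ε p q).aestronglyMeasurable (hmdot r s).aestronglyMeasurable (hε_mean p q)
  have hεγ : ∀ p q r s, ∫ ω, ε p q ω * γ r s ω = 0 := fun p q r s =>
    BME.indep_int_zero (hFI 3 2 (by decide) (hMε p q) (hMγ r s))
      (hmeas_ε p q).aestronglyMeasurable (hmeas_γ r s).aestronglyMeasurable (hε_mean p q)
  -- within a/b family
  have hab_pair : ∀ p r, p ≠ r → IndepFun (fun ω => (a p ω, b p ω))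
      (fun ω => (a r ω, b r ω)) volume := fun p r h => hab_indep.indepFun h
  have haa0 : ∀ p r, p ≠ r → ∫ ω, a p ω * a r ω = 0 := fun p r h =>
    BME.indep_int_zero ((hab_pair p r h).comp measurable_fst measurable_fst)
      (hmeas_a p).aestronglyMeasurable (hmeas_a r).aestronglyMeasurable (ha_mean p)
  have hab0 : ∀ p r, p ≠ r → ∫ ω, a p ω * b r ω = 0 := fun p r h =>
    BME.indep_int_zero ((hab_pair p r h).comp measurable_fst measurable_snd)
      (hmeas_a p).aestronglyMeasurable (hmeas_b r).aestronglyMeasurable (ha_mean p)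
  have hba0 : ∀ p r, p ≠ r → ∫ ω, b p ω * a r ω = 0 := fun p r h =>
    BME.indep_int_zero ((hab_pair p r h).comp measurable_snd measurable_fst)
      (hmeas_b p).aestronglyMeasurable (hmeas_a r).aestronglyMeasurable (hb_mean p)
  have hbb0 : ∀ p r, p ≠ r → ∫ ω, b p ω * b r ω = 0 := fun p r h =>
    BME.indep_int_zero ((hab_pair p r h).comp measurable_snd measurable_snd)
      (hmeas_b p).aestronglyMeasurable (hmeas_b r).aestronglyMeasurable (hb_mean p)
  have haa_s : ∀ p, ∫ ω, a p ω * a p ω = σa ^ 2 := fun p => by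
    rw [← BME.cov_eq (ha_mean p) (ha_mean p)]; exact ha_var p
  have hbb_s : ∀ p, ∫ ω, b p ω * b p ω = σb ^ 2 := fun p => by
    rw [← BME.cov_eq (hb_mean p) (hb_mean p)]; exact hb_var p
  have hab_s : ∀ p, ∫ ω, a p ω * b p ω = ρ * σa * σb := fun p => by
    rw [← BME.cov_eq (ha_mean p) (hb_mean p)]; exact hab_cov p
  have hba_s : ∀ p, ∫ ω, b p ω * a p ω = ρ * σa * σb := fun p => by
    have he : (fun ω => b p ω * a p ω) = fun ω => a p ω * b p ω :=
      funext fun ω => mul_comm _ _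
    rw [he]; exact hab_s p
  -- within γ family
  have hγ0 : ∀ p q r s : Fin n, p < q → r < s → (p, q) ≠ (r, s) →
      ∫ ω, γ p q ω * γ r s ω = 0 := by
    intro p q r s h1 h2 hne
    refine BME.indep_int_zero ?_ (hmeas_γ p q).aestronglyMeasurable
      (hmeas_γ r s).aestronglyMeasurable (hγ_mean p q)
    exact hγ_indep.indepFun (i := ⟨(p, q), h1⟩) (j := ⟨(r, s), h2⟩)
      (by simpa [Subtype.ext_iff] using hne)
  have hγzero : ∀ p q r s : Fin n, p ≠ q → r ≠ s → ¬(p = r ∧ q = s) → ¬(p = s ∧ q = r) →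
      ∫ ω, γ p q ω * γ r s ω = 0 := by
    intro p q r s hpq hrs h1 h2
    rcases hpq.lt_or_gt with hpq' | hpq' <;> rcases hrs.lt_or_gt with hrs' | hrs'
    · exact hγ0 p q r s hpq' hrs' (by simp only [ne_eq, Prod.mk.injEq, not_and]; tauto)
    · rw [hγ_symm r s]
      exact hγ0 p q s r hpq' hrs' (by simp only [ne_eq, Prod.mk.injEq, not_and]; tauto)
    · rw [hγ_symm p q]
      exact hγ0 q p r s hpq' hrs' (by simp only [ne_eq, Prod.mk.injEq, not_and]; tauto)
    · rw [hγ_symm p q, hγ_symm r s]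
      exact hγ0 q p s r hpq' hrs' (by simp only [ne_eq, Prod.mk.injEq, not_and]; tauto)
  have hγ_s : ∀ p q, ∫ ω, γ p q ω * γ p q ω = σγ ^ 2 := fun p q => by
    rw [← BME.cov_eq (hγ_mean p q) (hγ_mean p q)]; exact hγ_var p q
  -- within ε family
  have hε0 : ∀ p q r s : Fin n, (hpq : p ≠ q) → (hrs : r ≠ s) → (p, q) ≠ (r, s) →
      ∫ ω, ε p q ω * ε r s ω = 0 := by
    intro p q r s hpq hrs hne
    refine BME.indep_int_zero ?_ (hmeas_ε p q).aestronglyMeasurable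
      (hmeas_ε r s).aestronglyMeasurable (hε_mean p q)
    exact hε_indep.indepFun (i := ⟨(p, q), hpq⟩) (j := ⟨(r, s), hrs⟩)
      (by simpa [Subtype.ext_iff] using hne)
  have hε_s : ∀ p q, ∫ ω, ε p q ω * ε p q ω = σε ^ 2 := fun p q => by
    rw [← BME.cov_eq (hε_mean p q) (hε_mean p q)]; exact hε_var p q
  -- mean of ξ
  have hmean : ∀ p q : Fin n, p ≠ q → ∫ ω, ξ p q ω = 0 := by
    intro p q hpq
    have hfun : ξ p q = fun ω =>
        a p ω + b q ω + BME.dot z p q ω + γ p q ω + ε p q ω := funext fun ω => hξ p q ω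
    have I2 : Integrable (fun ω => a p ω + b q ω) volume := (hint_a p).add (hint_b q)
    have I3 : Integrable (fun ω => a p ω + b q ω + BME.dot z p q ω) volume :=
      I2.add (hint_dot p q hpq)
    have I4 : Integrable (fun ω => a p ω + b q ω + BME.dot z p q ω + γ p q ω) volume :=
      I3.add (hint_γ p q)
    rw [hfun]
    show ∫ ω, a p ω + b q ω + BME.dot z p q ω + γ p q ω + ε p q ω = 0
    rw [integral_add I4 (hint_ε p q), integral_add I3 (hint_γ p q),
      integral_add I2 (hint_dot p q hpq), integral_add (hint_a p) (hint_b q),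
      ha_mean, hb_mean, hdot_mean p q hpq, hγ_mean, hε_mean]
    ring
  -- key expansion of the covariance
  have key : ∀ p q r s : Fin n, p ≠ q → r ≠ s →
      cov (ξ p q) (ξ r s) = ∑ u : Fin 5, ∑ v : Fin 5,
        ∫ ω, ![a p, b q, BME.dot z p q, γ p q, ε p q] u ω *
          ![a r, b s, BME.dot z r s, γ r s, ε r s] v ω := by
    intro p q r s hpq hrs
    have hL2 : ∀ (p q : Fin n), p ≠ q → ∀ u : Fin 5,
        MemLp (![a p, b q, BME.dot z p q, γ p q, ε p q] u) 2 volume := by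
      intro p q h u
      fin_cases u
      exacts [ha_L2 p, hb_L2 q, hdot_L2 p q h, hγ_L2 p q, hε_L2 p q]
    have hsum : ∀ (p q : Fin n) (ω : Ω),
        ξ p q ω = ∑ u : Fin 5, ![a p, b q, BME.dot z p q, γ p q, ε p q] u ω := by
      intro p q ω
      rw [hξ p q ω]
      simp [Fin.sum_univ_five, BME.dot]
    rw [BME.cov_eq (hmean p q hpq) (hmean r s hrs)]
    calc ∫ ω, ξ p q ω * ξ r s ω
        = ∫ ω, (∑ u : Fin 5, ![a p, b q, BME.dot z p q, γ p q, ε p q] u ω) *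
            (∑ v : Fin 5, ![a r, b s, BME.dot z r s, γ r s, ε r s] v ω) := by
          simp_rw [← hsum]
      _ = _ := BME.integral_sum5_mul _ _
            (fun u v => BME.mul_int (hL2 p q hpq u) (hL2 r s hrs v))
  refine ⟨hmean i j hij, ?_, ?_, ?_, ?_, ?_, ?_⟩
  · -- variance
    rw [key i j i j hij hij]
    simp only [Fin.sum_univ_five, Matrix.cons_val_zero, Matrix.cons_val_one, Matrix.head_cons,
      Matrix.cons_val_two, Matrix.tail_cons, Matrix.cons_val_three, Matrix.cons_val_four,
      Matrix.head_fin_const]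
    rw [haa_s i, hab0 i j hij, haW, haγ, haε, hba0 j i hij.symm, hbb_s j, hbW, hbγ, hbε,
      hWa, hWb, hdd_same i j hij, hWγ, hWε, hγa, hγb, hγW, hγ_s i j, hγε,
      hεa, hεb, hεW, hεγ, hε_s i j]
    ring
  · -- cov(ξij, ξji)
    rw [key i j j i hij hij.symm]
    simp only [Fin.sum_univ_five, Matrix.cons_val_zero, Matrix.cons_val_one, Matrix.head_cons,
      Matrix.cons_val_two, Matrix.tail_cons, Matrix.cons_val_three, Matrix.cons_val_four,
      Matrix.head_fin_const]
    rw [haa0 i j hij, hab_s i, haW, haγ, haε, hba_s j, hbb0 j i hij.symm, hbW, hbγ, hbε,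
      hWa, hWb, hWγ, hWε, hγa, hγb, hγW, hγε, hεa, hεb, hεW, hεγ,
      show BME.dot z j i = BME.dot z i j from (hdot_symm i j).symm,
      hdd_same i j hij,
      hγ_symm j i, hγ_s i j,
      hε0 i j j i hij hij.symm (by simp [Prod.ext_iff]; tauto)]
    ring
  · -- cov(ξij, ξil)
    rw [key i j i l hij hil]
    simp only [Fin.sum_univ_five, Matrix.cons_val_zero, Matrix.cons_val_one, Matrix.head_cons,
      Matrix.cons_val_two, Matrix.tail_cons, Matrix.cons_val_three, Matrix.cons_val_four,
      Matrix.head_fin_const]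
    rw [haa_s i, hab0 i l hil, haW, haγ, haε, hba0 j i hij.symm, hbb0 j l hjl, hbW, hbγ, hbε,
      hWa, hWb, hWγ, hWε, hγa, hγb, hγW, hγε, hεa, hεb, hεW, hεγ,
      hdd_shared i j l hij hjl hil,
      hγzero i j i l hij hil (by tauto) (by tauto),
      hε0 i j i l hij hil (by simp [Prod.ext_iff]; tauto)]
    ring
  · -- cov(ξij, ξkj)
    rw [key i j k j hij hjk.symm]
    simp only [Fin.sum_univ_five, Matrix.cons_val_zero, Matrix.cons_val_one, Matrix.head_cons,
      Matrix.cons_val_two, Matrix.tail_cons, Matrix.cons_val_three, Matrix.cons_val_four,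
      Matrix.head_fin_const]
    rw [haa0 i k hik, hab0 i j hij, haW, haγ, haε, hba0 j k hjk, hbb_s j, hbW, hbγ, hbε,
      hWa, hWb, hWγ, hWε, hγa, hγb, hγW, hγε, hεa, hεb, hεW, hεγ,
      hdot_symm i j, hdot_symm k j, hdd_shared j i k hij.symm hik hjk,
      hγzero i j k j hij hjk.symm (by tauto) (by tauto),
      hε0 i j k j hij hjk.symm (by simp [Prod.ext_iff]; tauto)]
    ring
  · -- cov(ξij, ξki)
    rw [key i j k i hij hik.symm]
    simp only [Fin.sum_univ_five, Matrix.cons_val_zero, Matrix.cons_val_one, Matrix.head_cons,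
      Matrix.cons_val_two, Matrix.tail_cons, Matrix.cons_val_three, Matrix.cons_val_four,
      Matrix.head_fin_const]
    rw [haa0 i k hik, hab_s i, haW, haγ, haε, hba0 j k hjk, hbb0 j i hij.symm, hbW, hbγ, hbε,
      hWa, hWb, hWγ, hWε, hγa, hγb, hγW, hγε, hεa, hεb, hεW, hεγ,
      hdot_symm k i, hdd_shared i j k hij hjk hik,
      hγzero i j k i hij hik.symm (by tauto) (by tauto),
      hε0 i j k i hij hik.symm (by simp [Prod.ext_iff]; tauto)]
    ring
  · -- cov(ξij, ξkl)
    rw [key i j k l hij hkl]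
    simp only [Fin.sum_univ_five, Matrix.cons_val_zero, Matrix.cons_val_one, Matrix.head_cons,
      Matrix.cons_val_two, Matrix.tail_cons, Matrix.cons_val_three, Matrix.cons_val_four,
      Matrix.head_fin_const]
    rw [haa0 i k hik, hab0 i l hil, haW, haγ, haε, hba0 j k hjk, hbb0 j l hjl, hbW, hbγ, hbε,
      hWa, hWb, hWγ, hWε, hγa, hγb, hγW, hγε, hεa, hεb, hεW, hεγ,
      hdd_disj i j k l hij hik hil hjk hjl,
      hγzero i j k l hij hkl (by tauto) (by tauto),
      hε0 i j k l hij hkl (by simp [Prod.ext_iff]; tauto)]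
    ring
end
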